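/- Let α ∈ {−1,1} and let Q'₃ be the real quadratic form on ℂ × ℝ given by Q'₃(w,s) = α·|w|² − s², with Clifford algebra Cl₃(α) and canonical embedding ι. Set E₁ = ι(1,0), E₂ = ι(i,0), E₃ = ι(0,1). There exists an injective group homomorphism ψ_α : O₂(α) → (Cl₃(α))ˣ such that for z = x + iy ∈ Circle: ψ_α(z,0̂) = x·1 + y·E₁E₂ and ψ_α(z,1̂) = (x·1 + y·E₁E₂)·E₁E₃; every ψ_α(g) lies in the even part of Cl₃(α); and for all w ∈ ℂ, s ∈ ℝ: ψ_α(z,0̂)·ι(w,s)·ψ_α(z,0̂)⁻¹ = ι(z^{−2α}·w, s) and ψ_α(z,1̂)·ι(w,s)·ψ_α(z,1̂)⁻¹ = ι(−z^{−2α}·conj(w), −s), where z^{−2α} means conj(z)² when α = +1 and z² when α = −1. (This realizes O₂(α) ≅ Pin₂(α) as the spin group Spin₃(α), with vector representation given by Σ_α(R) = ((det R)·R) ⊕ (det R) applied to the image under Φ₀^{(−α)} ∘ σ_α.) -/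

import Mathlib

set_option linter.unnecessarySeqFocus false

open Complex

/-- Complex conjugation as a group endomorphism of the circle group. -/
noncomputable def conjC : Circle →* Circle where
  toFun z := ⟨(starRingEnd ℂ) (z : ℂ), by
    simp only [Submonoid.unitSphere, Metric.mem_sphere, dist_zero_right]
    simp [Circle.norm_coe]⟩
  map_one' := by ext; simp
  map_mul' a b := by ext; simp; rfl

@[simp] lemma conjC_coe (z : Circle) : (conjC z : ℂ) = (starRingEnd ℂ) (z : ℂ) := rfl

@[simp] lemma conjC_conjC (z : Circle) : conjC (conjC z) = z := by
  ext; simp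

/-- The element `-1` of the circle group. -/
noncomputable def negOneC : Circle := ⟨-1, by
  simp only [Submonoid.unitSphere, Metric.mem_sphere, dist_zero_right]
  simp⟩

@[simp] lemma negOneC_coe : (negOneC : ℂ) = -1 := rfl

/-- The sign `α = ±1` as an element of the circle group. -/
noncomputable def sgnC (α : ℤˣ) : Circle := if α = 1 then 1 else negOneC

/-- The underlying type of a twisted extension of `ℤ₂ = {0̂, 1̂}` by a commutative group `A`,
with twisting endomorphism `τ` and cocycle value `a₀`.  An element `⟨z, t⟩` stands for the
pair `(z, t)`.  The group `O₂(α)` of the paper is the case `A = Circle`, `τ` = complex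
conjugation, `a₀ = α = ±1`. -/
@[ext]
structure Tw (A : Type*) [CommGroup A] (τ : A →* A) (a₀ : A) where
  z : A
  t : ZMod 2

namespace Tw

variable {A : Type*} [CommGroup A] {τ : A →* A} {a₀ : A}

/-- The multiplication `(z₁,0̂)(z₂,t) = (z₁z₂, t)`, `(z₁,1̂)(z₂,0̂) = (z₁·τ(z₂), 1̂)`,
`(z₁,1̂)(z₂,1̂) = (a₀·z₁·τ(z₂), 0̂)`. -/
instance : Mul (Tw A τ a₀) :=
  ⟨fun g h => ⟨(if g.t = 1 ∧ h.t = 1 then a₀ else 1) * g.z * (if g.t = 1 then τ h.z else h.z),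
    g.t + h.t⟩⟩

/-- The unit `(1, 0̂)`. -/
instance : One (Tw A τ a₀) := ⟨⟨1, 0⟩⟩

instance : Inv (Tw A τ a₀) := ⟨fun g => ⟨if g.t = 1 then a₀⁻¹ * τ g.z⁻¹ else g.z⁻¹, g.t⟩⟩

@[simp] lemma mul_z (g h : Tw A τ a₀) :
    (g * h).z = (if g.t = 1 ∧ h.t = 1 then a₀ else 1) * g.z * (if g.t = 1 then τ h.z else h.z) :=
  rfl

@[simp] lemma mul_t (g h : Tw A τ a₀) : (g * h).t = g.t + h.t := rfl

@[simp] lemma one_z : (1 : Tw A τ a₀).z = 1 := rfl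
@[simp] lemma one_t : (1 : Tw A τ a₀).t = 0 := rfl

@[simp] lemma inv_z (g : Tw A τ a₀) :
    (g⁻¹).z = if g.t = 1 then a₀⁻¹ * τ g.z⁻¹ else g.z⁻¹ := rfl
@[simp] lemma inv_t (g : Tw A τ a₀) : (g⁻¹).t = g.t := rfl

lemma zmod2_cases : ∀ t : ZMod 2, t = 0 ∨ t = 1 := by decide

instance group [Fact (∀ a : A, τ (τ a) = a)] [Fact (τ a₀ = a₀)] : Group (Tw A τ a₀) := by
  have hττ := Fact.out (p := ∀ a : A, τ (τ a) = a)
  have hτa := Fact.out (p := τ a₀ = a₀)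
  refine Group.ofLeftAxioms ?_ ?_ ?_
  · rintro ⟨z₁, t₁⟩ ⟨z₂, t₂⟩ ⟨z₃, t₃⟩
    rcases zmod2_cases t₁ with rfl | rfl <;> rcases zmod2_cases t₂ with rfl | rfl <;>
      rcases zmod2_cases t₃ with rfl | rfl <;> ext <;>
      simp [hττ, hτa, map_mul, mul_comm, mul_assoc, mul_left_comm] <;> decide
  · rintro ⟨z, t⟩
    ext <;> simp
  · rintro ⟨z, t⟩
    rcases zmod2_cases t with rfl | rfl <;> ext <;>
      simp [hττ, hτa, map_mul, mul_comm, mul_assoc, mul_left_comm] <;> decide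

end Tw

instance : Fact (∀ a : Circle, conjC (conjC a) = a) := ⟨conjC_conjC⟩

instance (α : ℤˣ) : Fact (conjC (sgnC α) = sgnC α) := ⟨by
  rcases Int.units_eq_one_or α with rfl | rfl <;> ext <;> simp [sgnC, negOneC] <;>
    exact (conjC_coe _).trans (by simp : (starRingEnd ℂ) (-1 : ℂ) = -1)⟩

/-- The group `O₂(α)` for a sign `α ∈ {−1, 1}`: underlying set `Circle × ℤ₂` with the
twisted multiplication `(z₁,0̂)(z₂,t) = (z₁z₂,t)`, `(z₁,1̂)(z₂,0̂) = (z₁·conj(z₂),1̂)`,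
`(z₁,1̂)(z₂,1̂) = (α·z₁·conj(z₂),0̂)` and unit `(1,0̂)`. -/
abbrev O2 (α : ℤˣ) : Type := Tw Circle conjC (sgnC α)

namespace O2SpinAux
open Complex CliffordAlgebra
variable {α : ℤˣ} {Q' : QuadraticForm ℝ (ℂ × ℝ)}
  (hQ' : ∀ (w : ℂ) (s : ℝ), Q' (w, s) = (α : ℝ) * Complex.normSq w - s ^ 2)

local notation "e1" => ι Q' ((1:ℂ),(0:ℝ))
local notation "e2" => ι Q' ((I:ℂ),(0:ℝ))
local notation "e3" => ι Q' ((0:ℂ),(1:ℝ))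
local notation "aa" => ((α:ℤ):ℝ)
local notation "CC" => algebraMap ℝ (CliffordAlgebra Q')

/-- The "complex scalar" part of the spin group element. -/
noncomputable def U (Q' : QuadraticForm ℝ (ℂ × ℝ)) (z : ℂ) : CliffordAlgebra Q' :=
  algebraMap ℝ (CliffordAlgebra Q') z.re + z.im • (ι Q' ((1:ℂ),(0:ℝ)) * ι Q' ((I:ℂ),(0:ℝ)))

include hQ'

lemma h11 : e1 * e1 = CC aa := by rw [ι_sq_scalar, hQ']; norm_num
lemma h22 : e2 * e2 = CC aa := by rw [ι_sq_scalar, hQ']; norm_num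
lemma h33 : e3 * e3 = CC (-1) := by rw [ι_sq_scalar, hQ']; norm_num
lemma h21 : e2 * e1 = -(e1 * e2) := by
  refine ι_mul_ι_comm_of_isOrtho ?_
  simp only [QuadraticMap.isOrtho_def, Prod.mk_add_mk, hQ', Complex.normSq_apply]
  norm_num; try ring
lemma h31 : e3 * e1 = -(e1 * e3) := by
  refine ι_mul_ι_comm_of_isOrtho ?_
  simp only [QuadraticMap.isOrtho_def, Prod.mk_add_mk, hQ', Complex.normSq_apply]
  norm_num; try ring
lemma h32 : e3 * e2 = -(e2 * e3) := by
  refine ι_mul_ι_comm_of_isOrtho ?_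
  simp only [QuadraticMap.isOrtho_def, Prod.mk_add_mk, hQ', Complex.normSq_apply]
  norm_num; try ring
lemma h11' (x : CliffordAlgebra Q') : e1 * (e1 * x) = aa • x := by
  rw [← mul_assoc, h11 hQ', ← Algebra.smul_def]
lemma h22' (x : CliffordAlgebra Q') : e2 * (e2 * x) = aa • x := by
  rw [← mul_assoc, h22 hQ', ← Algebra.smul_def]
lemma h33' (x : CliffordAlgebra Q') : e3 * (e3 * x) = -x := by
  rw [← mul_assoc, h33 hQ', ← Algebra.smul_def]; simp
lemma h21' (x : CliffordAlgebra Q') : e2 * (e1 * x) = -(e1 * (e2 * x)) := by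
  rw [← mul_assoc, h21 hQ', ← mul_assoc, neg_mul]
lemma h31' (x : CliffordAlgebra Q') : e3 * (e1 * x) = -(e1 * (e3 * x)) := by
  rw [← mul_assoc, h31 hQ', ← mul_assoc, neg_mul]
lemma h32' (x : CliffordAlgebra Q') : e3 * (e2 * x) = -(e2 * (e3 * x)) := by
  rw [← mul_assoc, h32 hQ', ← mul_assoc, neg_mul]

omit hQ' in
lemma hvec (w : ℂ) (s : ℝ) : ι Q' ((w,s) : ℂ × ℝ) = w.re • e1 + w.im • e2 + s • e3 := by
  have h : ((w,s) : ℂ × ℝ) = w.re • ((1:ℂ),(0:ℝ)) + w.im • ((I:ℂ),(0:ℝ)) + s • ((0:ℂ),(1:ℝ)) := by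
    simp [Prod.ext_iff, Complex.ext_iff]
  rw [h, map_add, map_add, map_smul, map_smul, map_smul]

omit hQ' in
lemma U_one : U Q' 1 = 1 := by simp [U]
omit hQ' in
lemma U_real (r : ℝ) : U Q' (r : ℂ) = CC r := by simp [U]

lemma U_mul (ha : aa * aa = 1) (z z' : ℂ) : U Q' z * U Q' z' = U Q' (z * z') := by
  simp only [U, Algebra.algebraMap_eq_smul_one, mul_add, add_mul, sub_mul, mul_sub,
    smul_mul_assoc, mul_smul_comm, smul_smul, one_mul, mul_one, mul_assoc,
    h11' hQ', h22' hQ', h33' hQ', h21' hQ', h31' hQ', h32' hQ',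
    mul_neg, neg_mul, smul_neg, neg_neg, mul_re, mul_im,
    h11 hQ', h22 hQ', h33 hQ', h21 hQ', h31 hQ', h32 hQ']
  match_scalars <;> first
    | ring1
    | linear_combination (-(z'.im * z.im)) * ha
    | linear_combination (z'.im * z.im) * ha

lemma V_sq : (e1 * e3) * (e1 * e3) = CC aa := by
  simp only [Algebra.algebraMap_eq_smul_one, mul_assoc,
    h11' hQ', h22' hQ', h33' hQ', h21' hQ', h31' hQ', h32' hQ',
    mul_neg, neg_mul, smul_neg, neg_neg,
    h11 hQ', h22 hQ', h33 hQ', h21 hQ', h31 hQ', h32 hQ']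
  match_scalars <;> ring

lemma V_mul_U (z : ℂ) : (e1 * e3) * U Q' z = U Q' ((starRingEnd ℂ) z) * (e1 * e3) := by
  simp only [U, Algebra.algebraMap_eq_smul_one, mul_add, add_mul, sub_mul, mul_sub,
    smul_mul_assoc, mul_smul_comm, smul_smul, one_mul, mul_one, mul_assoc,
    h11' hQ', h22' hQ', h33' hQ', h21' hQ', h31' hQ', h32' hQ',
    mul_neg, neg_mul, smul_neg, neg_neg, conj_re, conj_im,
    h11 hQ', h22 hQ', h33 hQ', h21 hQ', h31 hQ', h32 hQ']
  match_scalars <;> ring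

lemma U_conj_vec (z : ℂ) (hz : z.re^2 + z.im^2 = 1) (ha : aa * aa = 1) (c w : ℂ) (s : ℝ)
    (hre : c.re = z.re^2 - z.im^2) (him : c.im = -(aa*(2*z.re*z.im))) :
    U Q' z * ι Q' ((w,s) : ℂ×ℝ) * U Q' ((starRingEnd ℂ) z) = ι Q' ((c * w : ℂ), s) := by
  rw [hvec w s, hvec (c * w) s]
  simp only [U, Algebra.algebraMap_eq_smul_one, mul_add, add_mul, sub_mul, mul_sub,
    smul_mul_assoc, mul_smul_comm, smul_smul, one_mul, mul_one, mul_assoc,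
    h11' hQ', h22' hQ', h33' hQ', h21' hQ', h31' hQ', h32' hQ',
    mul_neg, neg_mul, smul_neg, neg_neg, mul_re, mul_im, hre, him, conj_re, conj_im,
    h11 hQ', h22 hQ', h33 hQ', h21 hQ', h31 hQ', h32 hQ']
  match_scalars <;> first
    | ring1
    | linear_combination (-(z.im^2*w.re)) * ha
    | linear_combination (-(z.im^2*w.im)) * ha
    | linear_combination (z.im^2*s) * ha + s * hz

lemma V_conj_vec (ha : aa * aa = 1) (w : ℂ) (s : ℝ) :
    (e1 * e3) * ι Q' ((w,s) : ℂ×ℝ) * (aa • (e1 * e3)) =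
      ι Q' ((-((starRingEnd ℂ) w) : ℂ), -s) := by
  rw [hvec w s, hvec (-((starRingEnd ℂ) w)) (-s)]
  simp only [Algebra.algebraMap_eq_smul_one, mul_add, add_mul, sub_mul, mul_sub,
    smul_mul_assoc, mul_smul_comm, smul_smul, one_mul, mul_one, mul_assoc,
    h11' hQ', h22' hQ', h33' hQ', h21' hQ', h31' hQ', h32' hQ',
    mul_neg, neg_mul, smul_neg, neg_neg, neg_re, neg_im, conj_re, conj_im,
    h11 hQ', h22 hQ', h33 hQ', h21 hQ', h31 hQ', h32 hQ']
  match_scalars <;> first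
    | ring1
    | linear_combination (w.re) * ha
    | linear_combination (-w.re) * ha
    | linear_combination (w.im) * ha
    | linear_combination (-w.im) * ha
    | linear_combination (s) * ha
    | linear_combination (-s) * ha

end O2SpinAux


open CliffordAlgebra in
/-- `O₂(α) ≅ Pin₂(α)` is realized as the spin group `Spin₃(α)` inside the Clifford algebra
of `Q'₃(w,s) = α·|w|² − s²` on `ℂ × ℝ`: there is an injective group homomorphism `ψ_α` into
the units, landing in the even part, with `ψ_α(z,0̂) = x + y·E₁E₂`,
`ψ_α(z,1̂) = (x + y·E₁E₂)·E₁E₃` for `z = x + iy`, whose conjugation action on vectors is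
`ι(w,s) ↦ ι(z^{−2α}·w, s)` resp. `ι(w,s) ↦ ι(−z^{−2α}·conj(w), −s)`. -/
theorem O2_realized_as_spin3 (α : ℤˣ) (Q' : QuadraticForm ℝ (ℂ × ℝ))
    (hQ' : ∀ (w : ℂ) (s : ℝ), Q' (w, s) = (α : ℝ) * Complex.normSq w - s ^ 2) :
    ∃ ψ : O2 α →* (CliffordAlgebra Q')ˣ,
      Function.Injective ψ ∧
      (∀ z : Circle, ((ψ ⟨z, 0⟩ : (CliffordAlgebra Q')ˣ) : CliffordAlgebra Q') =
        algebraMap ℝ (CliffordAlgebra Q') (z : ℂ).re +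
          (z : ℂ).im • (ι Q' (1, 0) * ι Q' (Complex.I, 0))) ∧
      (∀ z : Circle, ((ψ ⟨z, 1⟩ : (CliffordAlgebra Q')ˣ) : CliffordAlgebra Q') =
        (algebraMap ℝ (CliffordAlgebra Q') (z : ℂ).re +
          (z : ℂ).im • (ι Q' (1, 0) * ι Q' (Complex.I, 0))) *
          (ι Q' (1, 0) * ι Q' (0, 1))) ∧
      (∀ g : O2 α, ((ψ g : (CliffordAlgebra Q')ˣ) : CliffordAlgebra Q') ∈ evenOdd Q' 0) ∧
      (∀ (z : Circle) (w : ℂ) (s : ℝ),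
        (((ψ ⟨z, 0⟩ : (CliffordAlgebra Q')ˣ) : CliffordAlgebra Q') * ι Q' (w, s) *
            (((ψ ⟨z, 0⟩)⁻¹ : (CliffordAlgebra Q')ˣ) : CliffordAlgebra Q') =
          ι Q' ((if α = 1 then (starRingEnd ℂ) (z : ℂ) ^ 2 else (z : ℂ) ^ 2) * w, s)) ∧
        (((ψ ⟨z, 1⟩ : (CliffordAlgebra Q')ˣ) : CliffordAlgebra Q') * ι Q' (w, s) *
            (((ψ ⟨z, 1⟩)⁻¹ : (CliffordAlgebra Q')ˣ) : CliffordAlgebra Q') =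
          ι Q' (-((if α = 1 then (starRingEnd ℂ) (z : ℂ) ^ 2 else (z : ℂ) ^ 2) *
            (starRingEnd ℂ) w), -s))) := by
  classical
  have ha : ((α:ℤ):ℝ) * ((α:ℤ):ℝ) = 1 := by
    rcases Int.units_eq_one_or α with h | h <;> rw [h] <;> norm_num
  have hCinj : Function.Injective (algebraMap ℝ (CliffordAlgebra Q')) := RingHom.injective _
  set UU : ℂ → CliffordAlgebra Q' := O2SpinAux.U Q' with hUUdef
  set V : CliffordAlgebra Q' := ι Q' ((1:ℂ),(0:ℝ)) * ι Q' ((0:ℂ),(1:ℝ)) with hVdef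
  have hUm : ∀ z z' : ℂ, UU z * UU z' = UU (z * z') := O2SpinAux.U_mul hQ' ha
  have hVU : ∀ z : ℂ, V * UU z = UU ((starRingEnd ℂ) z) * V := O2SpinAux.V_mul_U hQ'
  have hVV : V * V = algebraMap ℝ _ ((α:ℤ):ℝ) := O2SpinAux.V_sq hQ'
  have hUone : UU 1 = 1 := O2SpinAux.U_one
  have hUreal : ∀ r : ℝ, UU (r:ℂ) = algebraMap ℝ _ r := O2SpinAux.U_real
  have hsgn : ((sgnC α : Circle) : ℂ) = ((((α:ℤ):ℝ)) : ℂ) := by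
    rcases Int.units_eq_one_or α with h | h <;> simp [h, sgnC, negOneC] <;> norm_num
  -- Tw products and inverses, explicitly
  have hm00 : ∀ z1 z2 : Circle, (⟨z1,0⟩ * ⟨z2,0⟩ : O2 α) = ⟨z1*z2, 0⟩ := by
    intro z1 z2; ext <;> simp
  have hm01 : ∀ z1 z2 : Circle, (⟨z1,0⟩ * ⟨z2,1⟩ : O2 α) = ⟨z1*z2, 1⟩ := by
    intro z1 z2; ext <;> simp
  have hm10 : ∀ z1 z2 : Circle, (⟨z1,1⟩ * ⟨z2,0⟩ : O2 α) = ⟨z1 * conjC z2, 1⟩ := by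
    intro z1 z2; ext <;> simp
  have hm11 : ∀ z1 z2 : Circle, (⟨z1,1⟩ * ⟨z2,1⟩ : O2 α) = ⟨sgnC α * z1 * conjC z2, 0⟩ := by
    intro z1 z2; ext <;> simp <;> decide
  have hi0 : ∀ z : Circle, (⟨z,0⟩ : O2 α)⁻¹ = ⟨z⁻¹, 0⟩ := by
    intro z; ext <;> simp
  have hi1 : ∀ z : Circle, (⟨z,1⟩ : O2 α)⁻¹ = ⟨(sgnC α)⁻¹ * conjC z⁻¹, 1⟩ := by
    intro z; ext <;> simp
  -- the underlying function of ψ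
  set val : O2 α → CliffordAlgebra Q' := fun g =>
    UU ((g.z : Circle) : ℂ) * (if g.t = 1 then V else 1) with hvaldef
  have hv0 : ∀ z : Circle, val ⟨z, 0⟩ = UU (z : ℂ) := by
    intro z; simp [hvaldef]
  have hv1 : ∀ z : Circle, val ⟨z, 1⟩ = UU (z : ℂ) * V := by
    intro z; simp [hvaldef]
  have hval1 : val 1 = 1 := by
    have : (1 : O2 α) = ⟨1, 0⟩ := rfl
    rw [this, hv0]; simpa using hUone
  have hkey : ∀ g h : O2 α, val (g * h) = val g * val h := by
    rintro ⟨z1, t1⟩ ⟨z2, t2⟩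
    rcases Tw.zmod2_cases t1 with rfl | rfl <;> rcases Tw.zmod2_cases t2 with rfl | rfl
    · rw [hm00, hv0, hv0, hv0, hUm]; push_cast; rfl
    · rw [hm01, hv0, hv1, hv1, ← mul_assoc ((UU ((z1:Circle):ℂ))), hUm]; push_cast; rfl
    · rw [hm10, hv1, hv0, hv1]
      rw [mul_assoc ((UU ((z1:Circle):ℂ))), hVU, ← mul_assoc ((UU ((z1:Circle):ℂ))), hUm]
      push_cast [conjC_coe]; rfl
    · rw [hm11, hv1, hv1, hv0]
      rw [mul_assoc ((UU ((z1:Circle):ℂ))) V, ← mul_assoc V (UU ((z2:Circle):ℂ)) V, hVU,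
        mul_assoc (UU ((starRingEnd ℂ) ((z2:Circle):ℂ))) V V,
        ← mul_assoc ((UU ((z1:Circle):ℂ))), hUm, hVV,
        ← Algebra.commutes ((α:ℤ):ℝ), ← hUreal, hUm]
      rw [show ((((sgnC α * z1 * conjC z2 : Circle)):ℂ)) =
        ((((α:ℤ):ℝ):ℂ) * (((z1:Circle):ℂ) * (starRingEnd ℂ) ((z2:Circle):ℂ))) from by
          push_cast [conjC_coe, hsgn]; ring]
  have hinv : ∀ g : O2 α, val g * val g⁻¹ = 1 := by
    intro g; rw [← hkey, mul_inv_cancel, hval1]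
  have hinv' : ∀ g : O2 α, val g⁻¹ * val g = 1 := by
    intro g; rw [← hkey, inv_mul_cancel, hval1]
  set ψ : O2 α →* (CliffordAlgebra Q')ˣ :=
    { toFun := fun g => ⟨val g, val g⁻¹, hinv g, hinv' g⟩,
      map_one' := Units.ext (by simpa using hval1),
      map_mul' := fun g h => Units.ext (by simpa using hkey g h) } with hψdef
  have hψval : ∀ g : O2 α, ((ψ g : (CliffordAlgebra Q')ˣ) : CliffordAlgebra Q') = val g :=
    fun g => rfl
  have hψinv : ∀ g : O2 α,
      (((ψ g)⁻¹ : (CliffordAlgebra Q')ˣ) : CliffordAlgebra Q') = val g⁻¹ :=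
    fun g => rfl
  -- the complex scalar in the conjugation formulas
  set c : Circle → ℂ := fun z =>
    if α = 1 then (starRingEnd ℂ) (z : ℂ) ^ 2 else (z : ℂ) ^ 2 with hcdef
  have hznorm : ∀ z : Circle, (z:ℂ).re^2 + (z:ℂ).im^2 = 1 := by
    intro z
    have := Circle.normSq_coe z
    rw [Complex.normSq_apply] at this
    rw [pow_two, pow_two]; linarith
  have hcre : ∀ z : Circle, (c z).re = (z:ℂ).re^2 - (z:ℂ).im^2 := by
    intro z
    rcases Int.units_eq_one_or α with h | h <;>
      simp [hcdef, h, pow_two, Complex.mul_re] <;> ring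
  have hcim : ∀ z : Circle, (c z).im = -(((α:ℤ):ℝ) * (2 * (z:ℂ).re * (z:ℂ).im)) := by
    intro z
    rcases Int.units_eq_one_or α with h | h <;>
      simp [hcdef, h, pow_two, Complex.mul_im] <;> ring
  -- conjugation formulas
  have hconj0 : ∀ (z : Circle) (w : ℂ) (s : ℝ),
      val ⟨z,0⟩ * ι Q' ((w,s) : ℂ×ℝ) * val ((⟨z,0⟩ : O2 α)⁻¹) = ι Q' ((c z * w : ℂ), s) := by
    intro z w s
    rw [hi0, hv0, hv0, show ((z⁻¹ : Circle) : ℂ) = (starRingEnd ℂ) (z:ℂ) from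
      Circle.coe_inv_eq_conj z]
    exact O2SpinAux.U_conj_vec hQ' (z:ℂ) (hznorm z) ha (c z) w s (hcre z) (hcim z)
  have hVc : ∀ (w : ℂ) (s : ℝ),
      V * ι Q' ((w,s) : ℂ×ℝ) * (((α:ℤ):ℝ) • V) = ι Q' ((-((starRingEnd ℂ) w) : ℂ), -s) :=
    O2SpinAux.V_conj_vec hQ' ha
  have hconj1 : ∀ (z : Circle) (w : ℂ) (s : ℝ),
      val ⟨z,1⟩ * ι Q' ((w,s) : ℂ×ℝ) * val ((⟨z,1⟩ : O2 α)⁻¹) =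
        ι Q' ((-(c z * (starRingEnd ℂ) w) : ℂ), -s) := by
    intro z w s
    have hzinv : ((starRingEnd ℂ) (z:ℂ))⁻¹ = (z:ℂ) := by
      refine inv_eq_of_mul_eq_one_right ?_
      rw [mul_comm, Complex.mul_conj, Circle.normSq_coe]
      simp
    have havinv : ((((α:ℤ):ℝ)):ℂ)⁻¹ = ((((α:ℤ):ℝ)):ℂ) := by
      rcases Int.units_eq_one_or α with h | h <;> rw [h] <;> push_cast <;> norm_num
    have hcoe : (((sgnC α)⁻¹ * conjC z⁻¹ : Circle) : ℂ) = ((((α:ℤ):ℝ)):ℂ) * (z:ℂ) := by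
      simp only [Circle.coe_mul, Circle.coe_inv, conjC_coe, Circle.coe_inv_eq_conj, hsgn,
        Complex.conj_conj, Complex.conj_ofReal]
      rw [havinv]
      rw [map_inv₀, hzinv]
    have hvinv : val ((⟨z,1⟩ : O2 α)⁻¹) = ((α:ℤ):ℝ) • (V * UU ((starRingEnd ℂ) (z:ℂ))) := by
      rw [hi1, hv1, hcoe, ← hUm, hUreal, hVU, Complex.conj_conj, Algebra.smul_def, mul_assoc]
    rw [hv1, hvinv]
    have hassoc : UU (z:ℂ) * V * ι Q' ((w,s) : ℂ×ℝ) *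
        (((α:ℤ):ℝ) • (V * UU ((starRingEnd ℂ) (z:ℂ)))) =
        UU (z:ℂ) * (V * ι Q' ((w,s) : ℂ×ℝ) * (((α:ℤ):ℝ) • V)) * UU ((starRingEnd ℂ) (z:ℂ)) := by
      simp only [mul_smul_comm, smul_mul_assoc, mul_assoc]
    rw [hassoc, hVc]
    have := O2SpinAux.U_conj_vec hQ' (z:ℂ) (hznorm z) ha (c z)
      (-((starRingEnd ℂ) w)) (-s) (hcre z) (hcim z)
    rw [this]
    ring_nf
  -- even part
  have heven : ∀ g : O2 α, val g ∈ evenOdd Q' 0 := by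
    have h1mem : (1 : CliffordAlgebra Q') ∈ evenOdd Q' 0 :=
      Submodule.one_le.mp (one_le_evenOdd_zero Q')
    have hCmem : ∀ r : ℝ, algebraMap ℝ (CliffordAlgebra Q') r ∈ evenOdd Q' 0 := by
      intro r
      rw [Algebra.algebraMap_eq_smul_one]
      exact Submodule.smul_mem _ _ h1mem
    have hUmem : ∀ z : ℂ, UU z ∈ evenOdd Q' 0 := by
      intro z
      exact add_mem (hCmem _) (Submodule.smul_mem _ _ (ι_mul_ι_mem_evenOdd_zero Q' _ _))
    rintro ⟨zz, tt⟩
    rcases Tw.zmod2_cases tt with rfl | rfl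
    · rw [hv0]; exact hUmem _
    · rw [hv1]
      have := SetLike.mul_mem_graded (hUmem ((zz : Circle) : ℂ))
        (ι_mul_ι_mem_evenOdd_zero Q' ((1:ℂ),(0:ℝ)) ((0:ℂ),(1:ℝ)))
      simpa using this
  -- injectivity
  have hinj : Function.Injective ψ := by
    rw [injective_iff_map_eq_one]
    rintro ⟨z, t⟩ hg
    have hgv : val ⟨z, t⟩ = 1 := by rw [← hψval, hg]; rfl
    have hgi : val ((⟨z, t⟩ : O2 α)⁻¹) = 1 := by
      rw [← hψinv, hg]; rfl
    rcases Tw.zmod2_cases t with rfl | rfl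
    · -- t = 0 : the conjugation action fixes (1,0), so c z = 1, so z = ±1; z = -1 impossible
      have hc1 : ι Q' ((c z : ℂ), (0:ℝ)) = ι Q' ((1:ℂ), (0:ℝ)) := by
        have := hconj0 z 1 0
        simp only [hgv, hgi, one_mul, mul_one] at this
        rw [← this]
      have hd : ι Q' (((c z - 1 : ℂ), (0:ℝ)) : ℂ×ℝ) = 0 := by
        have : ((c z - 1 : ℂ), (0:ℝ)) = ((c z, (0:ℝ)) : ℂ×ℝ) - ((1:ℂ), (0:ℝ)) := by
          simp [Prod.ext_iff]
        rw [this, map_sub, hc1, sub_self]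
      have hQ0 : Q' ((c z - 1 : ℂ), (0:ℝ)) = 0 := by
        apply hCinj
        rw [← ι_sq_scalar, hd, mul_zero, map_zero]
      rw [hQ'] at hQ0
      have hns : Complex.normSq (c z - 1) = 0 := by
        have h1 : ((α:ℤ):ℝ) * (((α:ℤ):ℝ) * Complex.normSq (c z - 1) - 0^2) = 0 := by
          rw [hQ0, mul_zero]
        rw [mul_sub, ← mul_assoc, ha, one_mul] at h1
        simpa using h1
      have hcz : c z = 1 := by
        have := Complex.normSq_eq_zero.mp hns
        have : c z - 1 = 0 := this
        linear_combination this
      have hz2 : (z:ℂ)^2 = 1 := by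
        rcases Int.units_eq_one_or α with h | h
        · have : (starRingEnd ℂ) ((z:ℂ)^2) = (starRingEnd ℂ) 1 := by
            rw [map_one, map_pow, ← hcz, hcdef]; simp [h]
          exact (starRingEnd ℂ).injective this
        · rw [← hcz, hcdef]; simp [h]
      have hz1 : (z:ℂ) = 1 := by
        rcases sq_eq_one_iff.mp hz2 with h | h
        · exact h
        · exfalso
          have : UU (z:ℂ) = 1 := by rw [← hv0 z, hgv]
          rw [h] at this
          have hm1 : UU ((-1 : ℝ) : ℂ) = 1 := by
            simpa using this
          rw [hUreal] at hm1
          have : (-1 : ℝ) = 1 := by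
            apply hCinj; rw [hm1, map_one]
          norm_num at this
      ext
      · simpa using hz1
      · rfl
    · -- t = 1 : the conjugation action negates the last coordinate, contradiction
      exfalso
      have h31 : ι Q' (((0:ℂ), (1:ℝ)) : ℂ×ℝ) = ι Q' (((0:ℂ), (-1:ℝ)) : ℂ×ℝ) := by
        have := hconj1 z 0 1
        simp only [hgv, hgi, one_mul, mul_one] at this
        simpa using this
      have he3 : ι Q' (((0:ℂ), (1:ℝ)) : ℂ×ℝ) = 0 := by
        have hneg : (((0:ℂ), (-1:ℝ)) : ℂ×ℝ) = -(((0:ℂ), (1:ℝ)) : ℂ×ℝ) := by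
          simp [Prod.ext_iff]
        rw [hneg, map_neg] at h31
        have h2 : (2:ℝ) • ι Q' (((0:ℂ), (1:ℝ)) : ℂ×ℝ) = 0 := by
          rw [two_smul]
          nth_rewrite 2 [h31]
          simp
        simpa using smul_eq_zero.mp h2
      have : Q' ((0:ℂ), (1:ℝ)) = 0 := by
        apply hCinj
        rw [← ι_sq_scalar, he3, mul_zero, map_zero]
      rw [hQ'] at this
      simp at this
  refine ⟨ψ, hinj, ?_, ?_, ?_, ?_⟩
  · intro z; rw [hψval, hv0]; rfl
  · intro z; rw [hψval, hv1]; rfl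
  · intro g; rw [hψval]; exact heven g
  · intro z w s
    constructor
    · rw [hψval, hψinv]; exact hconj0 z w s
    · rw [hψval, hψinv]; exact hconj1 z w s
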